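/- Let J ≥ 1 be a natural number, m ∈ ℝ, Δ > 0, s₀ ∈ ℝ, and define equally spaced AP direction parameters s : Fin J → ℝ by s j = s₀ + j·(Δ/J). For an assignment g : ℝ → Fin J let D(g) = {t − s(g t) : t ∈ [m, m + Δ]}. Then the infimum over all assignments g : ℝ → Fin J of the angular deviation sSup D(g) − sInf D(g) equals Δ/J. -/

import Mathlib

/-- Proposition 3: with `J` equally spaced AP directions at spacing `Δ / J`,
the optimal achievable angular deviation is exactly `Δ / J`. -/
theorem stmt_4 (J : ℕ) (hJ : 1 ≤ J) (m Δ s₀ : ℝ) (hΔ : 0 < Δ)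
    (s : Fin J → ℝ) (hs : ∀ j : Fin J, s j = s₀ + (j : ℝ) * (Δ / J)) :
    (⨅ g : ℝ → Fin J,
      (sSup {x : ℝ | ∃ t ∈ Set.Icc m (m + Δ), x = t - s (g t)} -
        sInf {x : ℝ | ∃ t ∈ Set.Icc m (m + Δ), x = t - s (g t)})) = Δ / J := by
  haveI : Nonempty (Fin J) := ⟨⟨0, hJ⟩⟩
  have hJR : (0:ℝ) < J := by exact_mod_cast hJ
  set c := Δ / J with hcdef
  have hc : 0 < c := div_pos hΔ hJR
  have hJc : (J : ℝ) * c = Δ := by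
    rw [hcdef]
    field_simp [hJR.ne']
  set D : (ℝ → Fin J) → Set ℝ :=
    fun g => {x : ℝ | ∃ t ∈ Set.Icc m (m + Δ), x = t - s (g t)} with hD
  have hDne : ∀ g : ℝ → Fin J, (D g).Nonempty := by
    intro g
    exact ⟨m - s (g m), m, ⟨le_refl m, by linarith⟩, rfl⟩
  have hsB : ∀ j : Fin J, s₀ ≤ s j ∧ s j ≤ s₀ + (J:ℝ) * c := by
    intro j
    rw [hs j]
    have h0 : (0:ℝ) ≤ (j:ℝ) := by positivity
    have h1 : (j:ℝ) ≤ (J:ℝ) := by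
      have := j.is_lt
      exact_mod_cast le_of_lt (by exact_mod_cast this)
    constructor
    · nlinarith
    · nlinarith
  have hbdda : ∀ g : ℝ → Fin J, BddAbove (D g) := by
    intro g
    refine ⟨m + Δ - s₀, ?_⟩
    rintro x ⟨t, ⟨ht1, ht2⟩, rfl⟩
    have := (hsB (g t)).1
    linarith
  have hbddb : ∀ g : ℝ → Fin J, BddBelow (D g) := by
    intro g
    refine ⟨m - s₀ - (J:ℝ) * c, ?_⟩
    rintro x ⟨t, ⟨ht1, ht2⟩, rfl⟩
    have := (hsB (g t)).2
    linarith
  -- lower bound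
  have hlow : ∀ g : ℝ → Fin J, c ≤ sSup (D g) - sInf (D g) := by
    intro g
    set a := sInf (D g) with ha
    set b := sSup (D g) with hb
    have hcover : Set.Icc m (m + Δ) ⊆ ⋃ j : Fin J, Set.Icc (a + s j) (b + s j) := by
      intro t ht
      have hx : t - s (g t) ∈ D g := ⟨t, ht, rfl⟩
      have h1 : a ≤ t - s (g t) := csInf_le (hbddb g) hx
      have h2 : t - s (g t) ≤ b := le_csSup (hbdda g) hx
      exact Set.mem_iUnion.2 ⟨g t, ⟨by linarith, by linarith⟩⟩
    have hvol : MeasureTheory.volume (Set.Icc m (m + Δ)) ≤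
        ∑ j : Fin J, MeasureTheory.volume (Set.Icc (a + s j) (b + s j)) :=
      le_trans (MeasureTheory.measure_mono hcover) (MeasureTheory.measure_iUnion_fintype_le _ _)
    rw [Real.volume_Icc] at hvol
    have hvol2 : ∀ j : Fin J, MeasureTheory.volume (Set.Icc (a + s j) (b + s j)) =
        ENNReal.ofReal (b - a) := by
      intro j
      rw [Real.volume_Icc]
      ring_nf
    simp only [hvol2, Finset.sum_const, Finset.card_univ, Fintype.card_fin, nsmul_eq_mul] at hvol
    have hΔ' : m + Δ - m = Δ := by ring
    rw [hΔ'] at hvol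
    have hba : 0 ≤ b - a := by
      by_contra h
      push_neg at h
      rw [ENNReal.ofReal_eq_zero.2 (le_of_lt h)] at hvol
      simp only [mul_zero, nonpos_iff_eq_zero, ENNReal.ofReal_eq_zero] at hvol
      linarith
    have hle : ENNReal.ofReal Δ ≤ ENNReal.ofReal ((J:ℝ) * (b - a)) := by
      rw [ENNReal.ofReal_mul (le_of_lt hJR), ENNReal.ofReal_natCast]
      exact hvol
    have hΔle : Δ ≤ (J:ℝ) * (b - a) :=
      (ENNReal.ofReal_le_ofReal_iff (by positivity)).1 hle
    rw [hcdef, div_le_iff₀ hJR]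
    linarith
  -- upper bound: explicit assignment
  have hJ1 : J - 1 < J := by omega
  set g₀ : ℝ → Fin J :=
    fun t => ⟨min (J - 1) ⌊(t - m) / c⌋₊, lt_of_le_of_lt (min_le_left _ _) hJ1⟩ with hg₀
  have hsub : D g₀ ⊆ Set.Icc (m - s₀) (m - s₀ + c) := by
    rintro x ⟨t, ⟨ht1, ht2⟩, rfl⟩
    set n : ℕ := min (J - 1) ⌊(t - m) / c⌋₊ with hn
    have hsval : s (g₀ t) = s₀ + (n : ℝ) * c := by
      rw [hs]
    have htm : 0 ≤ t - m := by linarith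
    have hkey : (n:ℝ) * c ≤ t - m ∧ t - m ≤ (n:ℝ) * c + c := by
      by_cases hcase : ⌊(t - m) / c⌋₊ ≤ J - 1
      · have hne : n = ⌊(t - m) / c⌋₊ := min_eq_right hcase
        have hfl : (⌊(t - m) / c⌋₊ : ℝ) ≤ (t - m) / c := Nat.floor_le (by positivity)
        have hfu : (t - m) / c < (⌊(t - m) / c⌋₊ : ℝ) + 1 := Nat.lt_floor_add_one _
        rw [hne]
        constructor
        · calc (⌊(t - m) / c⌋₊ : ℝ) * c ≤ ((t - m) / c) * c := by
                exact mul_le_mul_of_nonneg_right hfl (le_of_lt hc)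
            _ = t - m := by field_simp
        · have : (t - m) / c * c < ((⌊(t - m) / c⌋₊ : ℝ) + 1) * c :=
            mul_lt_mul_of_pos_right hfu hc
          have heq : (t - m) / c * c = t - m := by field_simp
          nlinarith
      · -- floor ≥ J, so t - m ≥ J * c = Δ, hence t = m + Δ
        push_neg at hcase
        have hJfl : J ≤ ⌊(t - m) / c⌋₊ := by omega
        have : (J : ℝ) ≤ (t - m) / c := by
          calc (J : ℝ) ≤ (⌊(t - m) / c⌋₊ : ℝ) := by exact_mod_cast hJfl
            _ ≤ (t - m) / c := Nat.floor_le (by positivity)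
        have hge : Δ ≤ t - m := by
          rw [← hJc]
          calc (J:ℝ) * c ≤ ((t - m) / c) * c := by
                exact mul_le_mul_of_nonneg_right this (le_of_lt hc)
            _ = t - m := by field_simp
        have hteq : t - m = Δ := le_antisymm (by linarith) hge
        have hne : n = J - 1 := min_eq_left (le_of_lt (by omega : J - 1 < ⌊(t - m) / c⌋₊))
        have hncast : (n : ℝ) = (J : ℝ) - 1 := by
          rw [hne]
          have : ((J - 1 : ℕ) : ℝ) = (J : ℝ) - 1 := by
            push_cast [hJ]
            ring
          exact this
        rw [hncast, hteq]
        constructor <;> nlinarith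
    rw [hsval]
    exact ⟨by linarith [hkey.1], by linarith [hkey.2]⟩
  have hup : sSup (D g₀) - sInf (D g₀) ≤ c := by
    have h1 : sSup (D g₀) ≤ m - s₀ + c :=
      csSup_le (hDne g₀) (fun x hx => (hsub hx).2)
    have h2 : m - s₀ ≤ sInf (D g₀) :=
      le_csInf (hDne g₀) (fun x hx => (hsub hx).1)
    linarith
  -- combine
  have hbdd : BddBelow (Set.range fun g : ℝ → Fin J => sSup (D g) - sInf (D g)) := by
    refine ⟨c, ?_⟩
    rintro y ⟨g, rfl⟩
    exact hlow g
  apply le_antisymm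
  · exact le_trans (ciInf_le hbdd g₀) hup
  · exact le_ciInf hlow
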